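/- Let α ∈ ℝ and let ξ₁, ξ₂, η₁, η₂ ∈ ℝ with ξ₁ ≠ 0, ξ₂ ≠ 0, and ξ₁ + ξ₂ ≠ 0. Then the 3×3 determinant det [[ (α+1)|ξ₁|^α - η₁²/ξ₁², (α+1)|ξ₂|^α - η₂²/ξ₂², (α+1)|ξ₁+ξ₂|^α - (η₁+η₂)²/(ξ₁+ξ₂)² ], [ 2η₁/ξ₁, 2η₂/ξ₂, 2(η₁+η₂)/(ξ₁+ξ₂) ], [ 1, 1, 1 ]] equals - (2(η₁ξ₂ - η₂ξ₁)/(ξ₁ ξ₂ (ξ₁+ξ₂))) · ( (α+1)(|ξ₁|^α ξ₁ + |ξ₂|^α ξ₂ - |ξ₁+ξ₂|^α (ξ₁+ξ₂)) - (η₁ξ₂ - η₂ξ₁)²/(ξ₁ ξ₂ (ξ₁+ξ₂)) ). -/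

import Mathlib

/-- explicit evaluation of the determinant of the matrix formed from the
(unnormalized) normals to the characteristic surface of fractional KP-I at
`(ξ₁,η₁)`, `(ξ₂,η₂)`, `(ξ₁+ξ₂,η₁+η₂)`. -/
theorem statement17 (α ξ₁ ξ₂ η₁ η₂ : ℝ) (h₁ : ξ₁ ≠ 0) (h₂ : ξ₂ ≠ 0)
    (h₃ : ξ₁ + ξ₂ ≠ 0) :
    Matrix.det
        !![(α + 1) * |ξ₁| ^ α - η₁ ^ 2 / ξ₁ ^ 2,
             (α + 1) * |ξ₂| ^ α - η₂ ^ 2 / ξ₂ ^ 2,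
             (α + 1) * |ξ₁ + ξ₂| ^ α - (η₁ + η₂) ^ 2 / (ξ₁ + ξ₂) ^ 2;
           2 * η₁ / ξ₁, 2 * η₂ / ξ₂, 2 * (η₁ + η₂) / (ξ₁ + ξ₂);
           1, 1, 1] =
      -(2 * (η₁ * ξ₂ - η₂ * ξ₁) / (ξ₁ * ξ₂ * (ξ₁ + ξ₂))) *
        ((α + 1) * (|ξ₁| ^ α * ξ₁ + |ξ₂| ^ α * ξ₂ - |ξ₁ + ξ₂| ^ α * (ξ₁ + ξ₂)) -
          (η₁ * ξ₂ - η₂ * ξ₁) ^ 2 / (ξ₁ * ξ₂ * (ξ₁ + ξ₂))) := by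
  rw [Matrix.det_fin_three]
  simp only [Matrix.of_apply, Matrix.cons_val', Matrix.cons_val_zero, Matrix.cons_val_one,
    Matrix.cons_val_two, Matrix.head_cons, Matrix.tail_cons, Matrix.empty_val',
    Matrix.cons_val_fin_one, Matrix.head_fin_const]
  field_simp
  ring
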